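/- Define for α ∈ (0,2], r > 0, s ∈ ℂ∖{0}, and z in a truncated cone Γ = {z ∈ ℂ₊ : Im z > M, Im z > η|Re z|} with M large, F^α_{s,r}(z) = 1/G^α_{s,r}(z) where G^α_{s,r}(z) = -r^{1/α}·((1 - (1 - s·(-1/z)^α)^{1/r})/s)^{1/α} with the branch conventions: w^{1/α}, w^α defined via the logarithm with imaginary part in (0,2π) on ℂ∖[0,∞), and w^{1/r} defined via the logarithm with imaginary part in (-π,π) on ℂ∖(-∞,0]. Then for all u > 0, F^α_{s,r} ∘ F^α_{us,u} = F^α_{us,ur} holds on Γ (for M sufficiently large). -/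

import Mathlib

open Real Complex Filter

/-- The power `z ^ w` taken with the branch of the logarithm whose imaginary part
lies in `(0, 2π)`, defined on `ℂ ∖ [0,∞)` (branch (1) of the paper):
`log₁ z = log(-z) + iπ` has imaginary part in `(0,2π)` for `z ∉ [0,∞)`. -/
noncomputable def cpow1 (z w : ℂ) : ℂ :=
  Complex.exp (w * (Complex.log (-z) + Real.pi * Complex.I))

/-- `G^α_{s,r}(z) = -r^{1/α}·((1 - (1 - s·(-1/z)^α)^{1/r})/s)^{1/α}`, where the
`α` and `1/α` powers use the branch with `Im log ∈ (0,2π)` and the `1/r` power is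
the principal one (branch with `Im log ∈ (-π,π)` on `ℂ ∖ (-∞,0]`). -/
noncomputable def Gsr (α : ℝ) (s : ℂ) (r : ℝ) (z : ℂ) : ℂ :=
  -((r : ℂ) ^ ((1/α : ℂ))) *
    cpow1 ((1 - (1 - s * cpow1 (-1/z) (α : ℂ)) ^ ((1/r : ℂ))) / s) ((1/α : ℂ))

/-- `F^α_{s,r} = 1/G^α_{s,r}`. -/
noncomputable def Fsr (α : ℝ) (s : ℂ) (r : ℝ) (z : ℂ) : ℂ := 1 / Gsr α s r z

private lemma key_arctan {η a : ℝ} (hη : 0 < η) (ha0 : 0 < a)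
    (h : η * |Real.cos a| < Real.sin a) : Real.arctan η < a := by
  rcases lt_or_ge a (Real.pi / 2) with hc | hc
  · have hcos : 0 < Real.cos a := Real.cos_pos_of_mem_Ioo ⟨by linarith [Real.pi_pos], hc⟩
    have : η < Real.tan a := by
      rw [Real.tan_eq_sin_div_cos, lt_div_iff₀ hcos]
      calc η * Real.cos a ≤ η * |Real.cos a| := by
            apply mul_le_mul_of_nonneg_left (le_abs_self _) hη.le
        _ < Real.sin a := h
    calc Real.arctan η < Real.arctan (Real.tan a) := Real.arctan_strictMono this
      _ = a := Real.arctan_tan (by linarith [Real.pi_pos]) hc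
  · exact lt_of_lt_of_le (Real.arctan_lt_pi_div_two η) hc

private lemma arg_cone {η : ℝ} (hη : 0 < η) {z : ℂ} (h : η * |z.re| < z.im) :
    Real.arctan η < z.arg ∧ z.arg < Real.pi - Real.arctan η := by
  have him : 0 < z.im := lt_of_le_of_lt (by positivity) h
  have hz : z ≠ 0 := fun hz => by simp [hz] at him
  have habs : 0 < ‖z‖ := norm_pos_iff.mpr hz
  have hsin : Real.sin z.arg = z.im / ‖z‖ := Complex.sin_arg z
  have hcos : Real.cos z.arg = z.re / ‖z‖ := Complex.cos_arg hz
  have hkey : η * |Real.cos z.arg| < Real.sin z.arg := by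
    rw [hsin, hcos, abs_div, abs_of_pos habs, ← mul_div_assoc]
    exact div_lt_div_of_pos_right h habs
  have ha0 : 0 < z.arg := by
    rcases lt_or_eq_of_le (Complex.arg_nonneg_iff.mpr him.le) with h' | h'
    · exact h'
    · exact absurd (Complex.arg_eq_zero_iff.mp h'.symm).2 him.ne'
  refine ⟨key_arctan hη ha0 hkey, ?_⟩
  have haπ : z.arg < Real.pi := Complex.arg_lt_pi_iff.mpr (Or.inr him.ne')
  have h2 : Real.arctan η < Real.pi - z.arg := by
    apply key_arctan hη (by linarith)
    rw [Real.cos_pi_sub, Real.sin_pi_sub, abs_neg]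
    exact hkey
  linarith

private lemma klim {u : ℝ} (hu : 0 < u) {s : ℂ} (hs : s ≠ 0) :
    Tendsto (fun X : ℂ => (1 - (1 - (u:ℂ) * s * X) ^ (1/(u:ℂ))) / (s * X))
      (nhdsWithin 0 {(0:ℂ)}ᶜ) (nhds 1) := by
  have hu0 : (u:ℂ) ≠ 0 := Complex.ofReal_ne_zero.mpr hu.ne'
  have hg : HasDerivAt (fun c : ℂ => (1 + c) ^ (1/(u:ℂ))) (1/(u:ℂ)) 0 := by
    have h1 : HasDerivAt (fun c : ℂ => 1 + c) 1 0 := by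
      simpa using (hasDerivAt_id (0:ℂ)).const_add 1
    have h2 := h1.cpow_const (c := 1/(u:ℂ)) (by simpa using Complex.one_mem_slitPlane)
    simpa using h2
  have hslope := hasDerivAt_iff_tendsto_slope.mp hg
  have hmap : Tendsto (fun X : ℂ => -((u:ℂ) * s * X))
      (nhdsWithin 0 {(0:ℂ)}ᶜ) (nhdsWithin 0 {(0:ℂ)}ᶜ) := by
    rw [tendsto_nhdsWithin_iff]
    constructor
    · have : Tendsto (fun X : ℂ => -((u:ℂ) * s * X)) (nhds 0) (nhds (-((u:ℂ) * s * 0))) :=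
        ((continuous_const.mul continuous_id).neg).tendsto 0
      simpa using this.mono_left nhdsWithin_le_nhds
    · filter_upwards [self_mem_nhdsWithin] with X hX
      simp only [Set.mem_compl_iff, Set.mem_singleton_iff] at hX ⊢
      exact neg_ne_zero.mpr (mul_ne_zero (mul_ne_zero hu0 hs) hX)
  have hcomp := hslope.comp hmap
  have hmul := hcomp.const_mul (u:ℂ)
  have hlim : (u:ℂ) * (1/(u:ℂ)) = 1 := by field_simp
  rw [hlim] at hmul
  apply hmul.congr'
  filter_upwards [self_mem_nhdsWithin] with X hX
  simp only [Set.mem_compl_iff, Set.mem_singleton_iff] at hX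
  have hX' : -((u:ℂ) * s * X) ≠ 0 := neg_ne_zero.mpr (mul_ne_zero (mul_ne_zero hu0 hs) hX)
  simp only [Function.comp_apply, slope_def_field]
  rw [show (1:ℂ) + -((u:ℂ) * s * X) = 1 - (u:ℂ) * s * X by ring]
  rw [show (1:ℂ) + 0 = 1 by ring, Complex.one_cpow]
  field_simp
  ring

private lemma cpow1_def' (w c : ℂ) :
    cpow1 w c = Complex.exp (c * (Complex.log (-w) + (Real.pi : ℂ) * Complex.I)) := rfl

private lemma exp_sub_pi_I (a : ℂ) :
    Complex.exp (a - (Real.pi : ℂ) * Complex.I) = -Complex.exp a := by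
  rw [Complex.exp_sub, Complex.exp_pi_mul_I]
  ring

private lemma arg_exp {v : ℂ} (h1 : -Real.pi < v.im) (h2 : v.im ≤ Real.pi) :
    (Complex.exp v).arg = v.im := by
  rw [← Complex.log_im, Complex.log_exp h1 h2]

private lemma exp_ne_one_of {m : ℂ} (hm : m ≠ 0) (h : ‖m‖ < 2 * Real.pi) :
    Complex.exp m ≠ 1 := by
  intro h1
  obtain ⟨n, hn⟩ := Complex.exp_eq_one_iff.mp h1
  rcases eq_or_ne n 0 with h0 | h0
  · apply hm; rw [hn, h0]; simp
  · have hn1 : (1:ℝ) ≤ |(n:ℝ)| := by exact_mod_cast Int.one_le_abs h0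
    have h2 : (2:ℝ) * Real.pi ≤ ‖m‖ := by
      rw [hn, norm_mul]
      have e1 : ‖((n:ℂ))‖ = |(n:ℝ)| := by
        rw [← Complex.ofReal_intCast, Complex.norm_real, Real.norm_eq_abs]
      have e2 : ‖(2 * (Real.pi:ℂ) * Complex.I)‖ = 2 * Real.pi := by
        rw [show (2 * (Real.pi:ℂ) * Complex.I) = ((2 * Real.pi : ℝ):ℂ) * Complex.I by
          push_cast; ring, norm_mul, Complex.norm_real, Real.norm_eq_abs, Complex.norm_I, mul_one,
          abs_of_pos (by positivity)]
      rw [e1, e2]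
      nlinarith [Real.pi_pos]
    linarith

set_option maxHeartbeats 1000000 in
/-- for `α ∈ (0,2]`, `r, u > 0`, `s ≠ 0` and every opening `η > 0`,
the composition law `F^α_{s,r} ∘ F^α_{us,u} = F^α_{us,ur}` holds on a truncated
cone `Γ_{η,M} = {z ∈ ℂ₊ : Im z > M, Im z > η|Re z|}` for `M` sufficiently large. -/
theorem stmt5 (α : ℝ) (hα0 : 0 < α) (hα2 : α ≤ 2)
    (r u : ℝ) (hr : 0 < r) (hu : 0 < u)
    (s : ℂ) (hs : s ≠ 0) (η : ℝ) (hη : 0 < η) :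
    ∃ M > 0, ∀ z : ℂ, M < z.im → η * |z.re| < z.im →
      Fsr α s r (Fsr α (u * s) u z) = Fsr α (u * s) (u * r) z := by
  have hπ := Real.pi_pos
  obtain ⟨θ₀, hθ₀def⟩ : ∃ a, a = Real.arctan η := ⟨_, rfl⟩
  have hθ₀pos : 0 < θ₀ := by
    have h' := Real.arctan_strictMono hη
    rw [Real.arctan_zero] at h'
    rw [hθ₀def]; exact h'
  have hθ₀lt : θ₀ < Real.pi / 2 := by rw [hθ₀def]; exact Real.arctan_lt_pi_div_two η
  have hu0 : (u:ℂ) ≠ 0 := Complex.ofReal_ne_zero.mpr hu.ne'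
  have hr0 : (r:ℂ) ≠ 0 := Complex.ofReal_ne_zero.mpr hr.ne'
  have hα0' : (α:ℂ) ≠ 0 := Complex.ofReal_ne_zero.mpr hα0.ne'
  -- eventual smallness conditions
  have hEv1 : ∀ᶠ X : ℂ in nhds 0, ‖((u:ℂ) * s * X)‖ < 1/2 := by
    have hc : Tendsto (fun X : ℂ => (u:ℂ) * s * X) (nhds 0) (nhds 0) := by
      have hc' : Continuous (fun X : ℂ => (u:ℂ) * s * X) := by fun_prop
      simpa using hc'.tendsto (0:ℂ)
    have hball : ∀ᶠ y : ℂ in nhds 0, ‖y‖ < 1/2 := by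
      filter_upwards [Metric.ball_mem_nhds (0:ℂ) (by norm_num : (0:ℝ) < 1/2)] with y hy
      simpa [Metric.mem_ball, dist_zero_right] using hy
    exact hc.eventually hball
  have hEv2 : ∀ᶠ X : ℂ in nhds 0,
      ‖(Complex.log (1 - (u:ℂ) * s * X))‖ < u * Real.pi ∧
      ‖(Complex.log (1 - (u:ℂ) * s * X))‖ < 2 * Real.pi * (u * r) := by
    have h1 : Tendsto (fun X : ℂ => 1 - (u:ℂ) * s * X) (nhds 0) (nhds 1) := by
      have hc' : Continuous (fun X : ℂ => 1 - (u:ℂ) * s * X) := by fun_prop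
      simpa using hc'.tendsto (0:ℂ)
    have h2 : Tendsto (fun X : ℂ => Complex.log (1 - (u:ℂ) * s * X)) (nhds 0) (nhds 0) := by
      have := (continuousAt_clog Complex.one_mem_slitPlane).tendsto.comp h1
      simpa [Complex.log_one, Function.comp_def] using this
    have hεpos : 0 < min (u * Real.pi) (2 * Real.pi * (u * r)) := by positivity
    have hball : ∀ᶠ y : ℂ in nhds 0,
        ‖y‖ < min (u * Real.pi) (2 * Real.pi * (u * r)) := by
      filter_upwards [Metric.ball_mem_nhds (0:ℂ) hεpos] with y hy
      simpa [Metric.mem_ball, dist_zero_right] using hy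
    filter_upwards [h2.eventually hball] with X hX
    exact ⟨lt_of_lt_of_le hX (min_le_left _ _), lt_of_lt_of_le hX (min_le_right _ _)⟩
  have hEv3 : ∀ᶠ X : ℂ in nhdsWithin 0 {(0:ℂ)}ᶜ,
      (1 - (1 - (u:ℂ) * s * X) ^ (1/(u:ℂ))) / (s * X) ≠ 0 ∧
      |((1 - (1 - (u:ℂ) * s * X) ^ (1/(u:ℂ))) / (s * X)).arg| < α * θ₀ := by
    have e1 : ∀ᶠ w : ℂ in nhds 1, w ≠ 0 := by
      filter_upwards [IsOpen.eventually_mem isOpen_ne (show (1:ℂ) ∈ {x : ℂ | x ≠ 0} from one_ne_zero)] with w hw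
      exact hw
    have e2 : Tendsto Complex.arg (nhds 1) (nhds 0) := by
      have := Complex.continuousAt_arg Complex.one_mem_slitPlane
      rwa [ContinuousAt, Complex.arg_one] at this
    have e2' : ∀ᶠ w : ℂ in nhds 1, |Complex.arg w| < α * θ₀ := by
      have hpos : 0 < α * θ₀ := by positivity
      filter_upwards [e2.eventually (Metric.ball_mem_nhds (0:ℝ) hpos)] with w hw
      simpa [Metric.mem_ball, Real.dist_eq] using hw
    exact (klim hu hs).eventually (e1.and e2')
  have hEvAll := ((hEv1.and hEv2).filter_mono nhdsWithin_le_nhds).and hEv3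
  rw [eventually_nhdsWithin_iff, Metric.eventually_nhds_iff] at hEvAll
  obtain ⟨δ, hδpos, hδ⟩ := hEvAll
  refine ⟨max 1 (δ⁻¹ ^ α⁻¹), lt_of_lt_of_le one_pos (le_max_left _ _), ?_⟩
  intro z hzM hzcone
  -- basic facts about z
  have him : 0 < z.im := lt_of_le_of_lt (by positivity) hzcone
  have hz0 : z ≠ 0 := fun hz => by simp [hz] at him
  obtain ⟨ha1, ha2⟩ := arg_cone hη hzcone
  rw [← hθ₀def] at ha1 ha2
  have hargπ : z.arg ≠ Real.pi := ne_of_lt (by linarith)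
  have habsz : 0 < ‖z‖ := norm_pos_iff.mpr hz0
  -- the quantity X
  obtain ⟨V, hVdef⟩ : ∃ a : ℂ, a = (α:ℂ) * ((Real.pi : ℂ) * Complex.I - Complex.log z) := ⟨_, rfl⟩
  obtain ⟨X, hXdef⟩ : ∃ a : ℂ, a = Complex.exp V := ⟨_, rfl⟩
  have hX0 : X ≠ 0 := by rw [hXdef]; exact Complex.exp_ne_zero V
  have hVim : V.im = α * (Real.pi - z.arg) := by
    simp [hVdef, Complex.mul_im, Complex.sub_im, Complex.sub_re, Complex.log_im, Complex.log_re]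
  have hXval : cpow1 (-1/z) (α : ℂ) = X := by
    rw [cpow1_def']
    have h1 : -(-1/z) = z⁻¹ := by field_simp
    have h2 : Complex.log z⁻¹ = -Complex.log z := by
      apply Complex.ext
      · simp [Complex.log_re, map_inv₀, Real.log_inv]
      · simp [Complex.log_im, Complex.arg_inv, hargπ]
    rw [h1, h2, hXdef, hVdef]
    ring_nf
  -- smallness of X
  have hXabs : ‖X‖ < δ := by
    have h1 : δ⁻¹ ^ α⁻¹ < ‖z‖ := by
      calc δ⁻¹ ^ α⁻¹ ≤ max 1 (δ⁻¹ ^ α⁻¹) := le_max_right _ _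
        _ < z.im := hzM
        _ ≤ |z.im| := le_abs_self _
        _ ≤ ‖z‖ := Complex.abs_im_le_norm z
    have h2 : δ⁻¹ < ‖z‖ ^ α := by
      have := Real.rpow_lt_rpow (by positivity) h1 hα0
      rwa [Real.rpow_inv_rpow (by positivity) hα0.ne'] at this
    have h3 : ‖X‖ = ‖z‖ ^ (-α) := by
      rw [hXdef, Complex.norm_exp, Real.rpow_def_of_pos habsz]
      congr 1
      have : V.re = α * (0 - Real.log (‖z‖)) := by
        simp [hVdef, Complex.mul_re, Complex.sub_re, Complex.sub_im, Complex.log_re,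
          Complex.log_im]
      rw [this]; ring
    rw [h3, Real.rpow_neg habsz.le]
    have h4 : (‖z‖ ^ α)⁻¹ < (δ⁻¹)⁻¹ :=
      inv_strictAnti₀ (inv_pos.mpr hδpos) h2
    simpa using h4
  -- apply the eventual conditions at X
  have hP := hδ (show dist X 0 < δ by rwa [dist_zero_right])
    (by simpa using hX0)
  obtain ⟨⟨habsX2, hlog1, hlog2⟩, hk0, hkarg⟩ := hP
  -- names
  obtain ⟨A, hAdef⟩ : ∃ a : ℂ, a = 1 - (u:ℂ) * s * X := ⟨_, rfl⟩
  rw [← hAdef] at hlog1 hlog2 hk0 hkarg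
  obtain ⟨L, hLdef⟩ : ∃ a : ℂ, a = Complex.log A := ⟨_, rfl⟩
  rw [← hLdef] at hlog1 hlog2
  obtain ⟨B, hBdef⟩ : ∃ a : ℂ, a = A ^ (1/(u:ℂ)) := ⟨_, rfl⟩
  rw [← hBdef] at hk0 hkarg
  obtain ⟨k, hkdef⟩ : ∃ a : ℂ, a = (1 - B) / (s * X) := ⟨_, rfl⟩
  rw [← hkdef] at hk0 hkarg
  have hA0 : A ≠ 0 := by
    intro h
    rw [hAdef, sub_eq_zero] at h
    rw [← h] at habsX2
    norm_num at habsX2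
  have hL0 : L ≠ 0 := by
    intro h
    have h1 : A = 1 := by
      have := Complex.exp_log hA0
      rw [hLdef] at h
      rw [h, Complex.exp_zero] at this
      exact this.symm
    have h2 : (u:ℂ) * s * X = 0 := by
      rw [hAdef] at h1
      linear_combination -h1
    exact (mul_ne_zero (mul_ne_zero hu0 hs) hX0) h2
  have hBexp : B = Complex.exp (L * (1/(u:ℂ))) := by
    rw [hBdef, Complex.cpow_def_of_ne_zero hA0, hLdef]
  have habsL1 : ‖L‖ < u * Real.pi := hlog1
  have habsL2 : ‖L‖ < 2 * Real.pi * (u * r) := hlog2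
  have habsLu : ‖(L * (1/(u:ℂ)))‖ < Real.pi := by
    rw [norm_mul, norm_div, norm_one, Complex.norm_real, Real.norm_eq_abs, abs_of_pos hu, mul_one_div,
      div_lt_iff₀ hu]
    linarith [habsL1]
  have hB1 : B ≠ 1 := by
    rw [hBexp]
    exact exp_ne_one_of (mul_ne_zero hL0 (one_div_ne_zero hu0)) (by linarith [Real.pi_pos])
  -- the quantity C
  have hur0 : ((u * r : ℝ) : ℂ) ≠ 0 := Complex.ofReal_ne_zero.mpr (by positivity)
  obtain ⟨C, hCdef⟩ : ∃ a : ℂ, a = A ^ (1 / ((u * r : ℝ) : ℂ)) := ⟨_, rfl⟩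
  have hCexp : C = Complex.exp (L * (1 / ((u * r : ℝ) : ℂ))) := by
    rw [hCdef, Complex.cpow_def_of_ne_zero hA0, hLdef]
  have habsLur : ‖(L * (1 / ((u * r : ℝ) : ℂ)))‖ < 2 * Real.pi := by
    rw [norm_mul, norm_div, norm_one, Complex.norm_real, Real.norm_eq_abs, abs_of_pos (by positivity : (0:ℝ) < u * r),
      mul_one_div, div_lt_iff₀ (by positivity : (0:ℝ) < u * r)]
    linarith [habsL2]
  have hC1 : C ≠ 1 := by
    rw [hCexp]
    exact exp_ne_one_of (mul_ne_zero hL0 (one_div_ne_zero hur0)) habsLur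
  have h1B : (1:ℂ) - B ≠ 0 := sub_ne_zero.mpr (Ne.symm hB1)
  have h1C : (1:ℂ) - C ≠ 0 := sub_ne_zero.mpr (Ne.symm hC1)
  obtain ⟨w₁, hw₁def⟩ : ∃ a : ℂ, a = (1 - B) / ((u:ℂ) * s) := ⟨_, rfl⟩
  have hw₁0 : w₁ ≠ 0 := by rw [hw₁def]; exact div_ne_zero h1B (mul_ne_zero hu0 hs)
  have hw₁X : w₁ = X * k / (u:ℂ) := by
    rw [hw₁def, hkdef]; field_simp
  -- angle bounds
  have hθ1 : α * θ₀ < α * (Real.pi - z.arg) :=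
    mul_lt_mul_of_pos_left (by linarith) hα0
  have hθ2 : α * (Real.pi - z.arg) < α * (Real.pi - θ₀) :=
    mul_lt_mul_of_pos_left (by linarith) hα0
  have hθ3 : α * (Real.pi - θ₀) ≤ 2 * (Real.pi - θ₀) := by nlinarith
  have hak := abs_lt.mp hkarg
  have hαθ2 : α * θ₀ ≤ 2 * θ₀ := by nlinarith
  have hαθ₀pos : 0 < α * θ₀ := by positivity
  -- the argument of -w₁
  have hVsubim : (V - (Real.pi:ℂ) * Complex.I).im = α * (Real.pi - z.arg) - Real.pi := by
    simp [Complex.sub_im, Complex.mul_im, hVim]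
  have hEarg : (Complex.exp (V - (Real.pi:ℂ) * Complex.I)).arg
      = α * (Real.pi - z.arg) - Real.pi := by
    rw [arg_exp (by rw [hVsubim]; linarith) (by rw [hVsubim]; linarith), hVsubim]
  have hnegw₁ : -w₁ = ((u⁻¹ : ℝ) : ℂ) * (Complex.exp (V - (Real.pi:ℂ) * Complex.I) * k) := by
    rw [exp_sub_pi_I, ← hXdef, hw₁X]
    push_cast
    field_simp
  have hargw₁ : (-w₁).arg = (α * (Real.pi - z.arg) - Real.pi) + k.arg := by
    rw [hnegw₁, Complex.arg_real_mul _ (inv_pos.mpr hu)]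
    have hmem : (Complex.exp (V - (Real.pi:ℂ) * Complex.I)).arg + k.arg
        ∈ Set.Ioc (-Real.pi) Real.pi := by
      rw [hEarg]
      constructor
      · linarith [hak.1]
      · linarith [hak.2]
    rw [Complex.arg_mul (Complex.exp_ne_zero _) hk0 hmem, hEarg]
  -- the first Gsr
  obtain ⟨DD, hDDdef⟩ : ∃ a : ℂ, a = ((Real.log u / α : ℝ) : ℂ)
      + ((α⁻¹ : ℝ) : ℂ) * (Complex.log (-w₁) + (Real.pi:ℂ) * Complex.I) := ⟨_, rfl⟩
  obtain ⟨G1, hG1def⟩ : ∃ a : ℂ, a = Gsr α ((u:ℂ) * s) u z := ⟨_, rfl⟩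
  have hG₁ : G1 = Complex.exp (DD - (Real.pi:ℂ) * Complex.I) := by
    rw [hG1def]
    simp only [Gsr]
    rw [hXval, ← hAdef, ← hBdef, ← hw₁def, cpow1_def',
      Complex.cpow_def_of_ne_zero hu0, ← Complex.ofReal_log hu.le,
      exp_sub_pi_I, neg_mul, ← Complex.exp_add]
    congr 2
    rw [hDDdef]
    push_cast
    ring
  have hG₁ne : G1 ≠ 0 := by rw [hG₁]; exact Complex.exp_ne_zero _
  have hDDim : DD.im = (Real.pi - z.arg) + α⁻¹ * k.arg := by
    have h1 : DD.im = α⁻¹ * ((-w₁).arg + Real.pi) := by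
      simp [hDDdef, Complex.add_im, Complex.mul_im, Complex.log_im]
    rw [h1, hargw₁]
    field_simp
    ring
  have hinva : α⁻¹ * (α * θ₀) = θ₀ := by field_simp
  have h5 : -θ₀ < α⁻¹ * k.arg := by
    have := mul_lt_mul_of_pos_left hak.1 (inv_pos.mpr hα0)
    rw [mul_neg, hinva] at this
    linarith
  have h6 : α⁻¹ * k.arg < θ₀ := by
    have := mul_lt_mul_of_pos_left hak.2 (inv_pos.mpr hα0)
    rw [hinva] at this
    exact this
  have hDD1 : 0 < DD.im := by rw [hDDim]; linarith
  have hDD2 : DD.im < Real.pi := by rw [hDDim]; linarith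
  have hlogG₁ : Complex.log G1 = DD - (Real.pi:ℂ) * Complex.I := by
    rw [hG₁]
    apply Complex.log_exp
    · simp only [Complex.sub_im, Complex.mul_im, Complex.ofReal_re, Complex.ofReal_im,
        Complex.I_im, Complex.I_re]
      linarith
    · simp only [Complex.sub_im, Complex.mul_im, Complex.ofReal_re, Complex.ofReal_im,
        Complex.I_im, Complex.I_re]
      linarith
  -- the Y quantity
  have hYval : cpow1 (-1 / (1 / G1)) (α : ℂ) = (u:ℂ) * w₁ := by
    rw [cpow1_def']
    have h1 : -(-1 / (1 / G1)) = G1 := by field_simp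
    rw [h1, hlogG₁]
    have h2 : (α:ℂ) * (DD - (Real.pi:ℂ) * Complex.I + (Real.pi:ℂ) * Complex.I)
        = ((Real.log u : ℝ) : ℂ) + (Complex.log (-w₁) + (Real.pi:ℂ) * Complex.I) := by
      rw [hDDdef]
      push_cast
      field_simp
      ring
    rw [h2, Complex.exp_add, Complex.exp_add,
      Complex.exp_log (neg_ne_zero.mpr hw₁0), Complex.exp_pi_mul_I,
      ← Complex.ofReal_exp, Real.exp_log hu]
    ring
  have hsY : 1 - s * ((u:ℂ) * w₁) = B := by
    rw [hw₁def, show s * ((u:ℂ) * ((1 - B) / ((u:ℂ) * s)))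
      = ((u:ℂ) * s) * ((1 - B) / ((u:ℂ) * s)) from by ring,
      mul_div_cancel₀ _ (mul_ne_zero hu0 hs)]
    ring
  have hlogB : Complex.log B = L * (1 / (u:ℂ)) := by
    rw [hBexp]
    have h := lt_of_le_of_lt (Complex.abs_im_le_norm (L * (1 / (u:ℂ)))) habsLu
    obtain ⟨hb1, hb2⟩ := abs_lt.mp h
    exact Complex.log_exp hb1 hb2.le
  have hBr : B ^ (1 / (r:ℂ)) = C := by
    rw [Complex.cpow_def_of_ne_zero (by rw [hBexp]; exact Complex.exp_ne_zero _),
      hlogB, hCexp]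
    congr 1
    push_cast
    field_simp
  obtain ⟨w₂, hw₂def⟩ : ∃ a : ℂ, a = (1 - C) / s := ⟨_, rfl⟩
  have hw₂0 : w₂ ≠ 0 := by rw [hw₂def]; exact div_ne_zero h1C hs
  have hw₂u : (1 - C) / ((u:ℂ) * s) = w₂ / (u:ℂ) := by
    rw [hw₂def]; ring
  -- LHS and RHS of the main identity
  have hLHS : Gsr α s r (1 / G1)
      = -((r:ℂ) ^ (1/(α:ℂ))) * Complex.exp ((1/(α:ℂ)) * (Complex.log (-w₂) + (Real.pi:ℂ) * Complex.I)) := by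
    simp only [Gsr]
    rw [hYval, hsY, hBr, ← hw₂def, cpow1_def']
  have hRHS : Gsr α ((u:ℂ) * s) (u * r) z
      = -(((u * r : ℝ):ℂ) ^ (1/(α:ℂ))) * Complex.exp ((1/(α:ℂ)) * (Complex.log (-(w₂ / (u:ℂ))) + (Real.pi:ℂ) * Complex.I)) := by
    simp only [Gsr]
    rw [hXval, ← hAdef, ← hCdef, hw₂u, cpow1_def']
  have hlogdiv : Complex.log (-(w₂ / (u:ℂ)))
      = -((Real.log u : ℝ) : ℂ) + Complex.log (-w₂) := by
    have h1 : -(w₂ / (u:ℂ)) = ((u⁻¹ : ℝ) : ℂ) * (-w₂) := by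
      push_cast
      field_simp
    rw [h1, Complex.log_ofReal_mul (inv_pos.mpr hu) (neg_ne_zero.mpr hw₂0), Real.log_inv]
    push_cast
    ring
  have hfin : Gsr α s r (1 / G1) = Gsr α ((u:ℂ) * s) (u * r) z := by
    rw [hLHS, hRHS, hlogdiv,
      Complex.cpow_def_of_ne_zero hr0, Complex.cpow_def_of_ne_zero hur0,
      ← Complex.ofReal_log hr.le, ← Complex.ofReal_log (by positivity : (0:ℝ) ≤ u * r),
      Real.log_mul hu.ne' hr.ne', neg_mul, neg_mul,
      ← Complex.exp_add, ← Complex.exp_add]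
    congr 2
    push_cast
    ring
  simp only [Fsr]
  rw [← hG1def, hfin]
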